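/- Let J(x) = (1/2)‖Hx - y‖² + λR(x) where R is 1-weakly convex and differentiable. If λ ≤ λ_min(HᵀH), then J is (λ_min(HᵀH) - λ)-strongly convex; in particular, J is convex. -/

import Mathlib

lemma combo_norm_sq {E : Type*} [NormedAddCommGroup E] [InnerProductSpace ℝ E]
    (u v : E) (t s : ℝ) (h : t + s = 1) :
    ‖t • u + s • v‖ ^ 2 = t * ‖u‖ ^ 2 + s * ‖v‖ ^ 2 - t * s * ‖u - v‖ ^ 2 := by
  have h1 : ∀ w : E, ‖w‖ ^ 2 = inner ℝ w w := fun w => (real_inner_self_eq_norm_sq w).symm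
  simp only [h1, inner_add_left, inner_add_right, inner_sub_left, inner_sub_right,
    real_inner_smul_left, real_inner_smul_right]
  linear_combination (t * (inner ℝ u u : ℝ) + s * inner ℝ v v) * h

/-- Let `J(x) = (1/2)‖Hx - y‖² + λ R(x)` with `R` 1-weakly convex and differentiable. If
`λ ≤ λ_min(HᵀH)` (i.e. `λ_min ‖x‖² ≤ ‖Hx‖²` for all `x` with `λ ≤ λ_min`), then `J` is
`(λ_min(HᵀH) - λ)`-strongly convex; in particular, `J` is convex. -/
theorem objective_strongly_convex {d m : ℕ}
    (H : EuclideanSpace ℝ (Fin d) →L[ℝ] EuclideanSpace ℝ (Fin m))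
    (y : EuclideanSpace ℝ (Fin m)) (lam lamMin : ℝ) (hlam : 0 < lam)
    (R : EuclideanSpace ℝ (Fin d) → ℝ) (hRdiff : Differentiable ℝ R)
    (hR : ConvexOn ℝ Set.univ (fun x => R x + ((1 : ℝ) / 2) * ‖x‖ ^ 2))
    (hmin : ∀ x, lamMin * ‖x‖ ^ 2 ≤ ‖H x‖ ^ 2)
    (hle : lam ≤ lamMin) :
    ConvexOn ℝ Set.univ
      (fun x => (((1 : ℝ) / 2) * ‖H x - y‖ ^ 2 + lam * R x) - ((lamMin - lam) / 2) * ‖x‖ ^ 2) ∧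
    ConvexOn ℝ Set.univ
      (fun x => ((1 : ℝ) / 2) * ‖H x - y‖ ^ 2 + lam * R x) := by
  have key : ∀ c : ℝ, c ≤ lamMin →
      ConvexOn ℝ Set.univ
        (fun x => (((1 : ℝ) / 2) * ‖H x - y‖ ^ 2 + lam * R x) - ((c - lam) / 2) * ‖x‖ ^ 2) := by
    intro c hc
    refine ⟨convex_univ, ?_⟩
    intro a _ b _ t s ht hs hts
    simp only [smul_eq_mul]
    -- R part
    have hRineq := hR.2 (Set.mem_univ a) (Set.mem_univ b) ht hs hts
    simp only [smul_eq_mul] at hRineq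
    -- quadratic identities
    have hx : ‖t • a + s • b‖ ^ 2 = t * ‖a‖ ^ 2 + s * ‖b‖ ^ 2 - t * s * ‖a - b‖ ^ 2 :=
      combo_norm_sq a b t s hts
    have hHx : H (t • a + s • b) - y = t • (H a - y) + s • (H b - y) := by
      rw [map_add, map_smul, map_smul]
      have : t • (H a - y) + s • (H b - y) = t • H a + s • H b - (t + s) • y := by module
      rw [this, hts, one_smul]
    have hH : ‖H (t • a + s • b) - y‖ ^ 2 =
        t * ‖H a - y‖ ^ 2 + s * ‖H b - y‖ ^ 2 - t * s * ‖H a - H b‖ ^ 2 := by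
      rw [hHx, combo_norm_sq _ _ _ _ hts]
      congr 3
      abel
    have hmin' : lamMin * ‖a - b‖ ^ 2 ≤ ‖H a - H b‖ ^ 2 := by
      have := hmin (a - b)
      rwa [map_sub] at this
    have hts2 : 0 ≤ t * s := mul_nonneg ht hs
    have hnn : 0 ≤ ‖a - b‖ ^ 2 := sq_nonneg _
    nlinarith [mul_le_mul_of_nonneg_left hRineq (le_of_lt hlam),
      mul_le_mul_of_nonneg_left hmin' hts2,
      mul_nonneg hts2 (mul_nonneg (sub_nonneg.2 hc) hnn)]
  constructor
  · exact key lamMin le_rfl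
  · have := key lam hle
    simpa using this
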